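/- Let k be a field of characteristic p > 2 and S = k⟨x,y⟩/(yx − xy − (1/2)x²). With α = −y^{p−2} + ∑_{i=1}^{p−2} (−1)^{i+1}((i+1)!/2^{i+1}) x^i y^{p−2−i}, one has α·x = (x+y)^{p−1} − y^{p−1} in S. -/

import Mathlib

open Finset

noncomputable def gco (k : Type*) [Field k] (n i : ℕ) : k :=
  (n.choose i : k) * (i.factorial : k) / 2 ^ i

noncomputable def tco (k : Type*) [Field k] (n i : ℕ) : k :=
  if i = 0 then (n : k) else (n.choose (i+1) : k) * ((i+1).factorial : k) / 2 ^ (i+1)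

section aux
variable {k : Type*} [Field k] {S : Type*} [Ring S] [Algebra k S]

lemma zxpow {x z : S} {c : k} (hzx : z * x = x * z + c • (x * x)) :
    ∀ i : ℕ, z * x ^ i = x ^ i * z + ((i : k) * c) • (x ^ (i+1)) := by
  intro i
  induction i with
  | zero => simp
  | succ i ih =>
    rw [pow_succ, ← mul_assoc, ih, add_mul, smul_mul_assoc, mul_assoc, hzx]
    have e1 : x ^ i * (x * z + c • (x * x)) = x ^ (i+1) * z + c • x ^ (i+1+1) := by
      simp [pow_succ, mul_add, mul_smul_comm, mul_assoc]
    have e2 : x ^ (i+1) * x = x ^ (i+1+1) := by rw [← pow_succ]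
    rw [e1, e2]
    rw [show x ^ i * x = x ^ (i+1) from (pow_succ x i).symm]
    push_cast
    module

lemma gco_rec (n i : ℕ) (h2 : (2:k) ≠ 0) :
    gco k (n+1) (i+1) = gco k n (i+1) + (((i:k)+1) * (2:k)⁻¹) * gco k n i := by
  unfold gco
  rw [Nat.choose_succ_succ n i]
  have h1 : ((i+1).factorial : k) = ((i:k)+1) * (i.factorial : k) := by
    push_cast [Nat.factorial_succ]; ring
  push_cast [h1]
  field_simp
  ring
end aux

section aux2
variable {k : Type*} [Field k] {S : Type*} [Ring S] [Algebra k S]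

lemma gco_zero (n : ℕ) : gco k n 0 = 1 := by simp [gco]

lemma gco_top (n : ℕ) : gco k n (n+1) = 0 := by simp [gco, Nat.choose_succ_self]

lemma upow (h2 : (2:k) ≠ 0) {x z : S} (hzx : z * x = x * z + (2:k)⁻¹ • (x * x)) (n : ℕ) :
    (z + (2:k)⁻¹ • x) ^ n = ∑ i ∈ range (n+1), gco k n i • (x ^ i * z ^ (n - i)) := by
  set c : k := (2:k)⁻¹ with hc
  induction n with
  | zero => simp [gco]
  | succ n ih =>
    rw [pow_succ', ih, Finset.mul_sum]
    have hterm : ∀ i ∈ range (n+1),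
        (z + c • x) * (gco k n i • (x ^ i * z ^ (n - i))) =
          gco k n i • (x ^ i * z ^ (n + 1 - i)) +
            (((i:k)+1) * c * gco k n i) • (x ^ (i+1) * z ^ (n - i)) := by
      intro i hi
      have hin : i ≤ n := by simpa [Nat.lt_succ_iff] using hi
      have h1 : z * (x ^ i * z ^ (n - i)) = x ^ i * z ^ (n+1-i) + ((i:k) * c) • (x ^ (i+1) * z ^ (n-i)) := by
        rw [← mul_assoc, zxpow hzx, add_mul, smul_mul_assoc, mul_assoc, ← pow_succ',
          Nat.sub_add_comm hin]
      have h2' : x * (x ^ i * z ^ (n-i)) = x ^ (i+1) * z ^ (n-i) := by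
        rw [← mul_assoc, ← pow_succ']
      rw [add_mul, mul_smul_comm, mul_smul_comm, h1, smul_mul_assoc, h2']
      module
    rw [Finset.sum_congr rfl hterm, Finset.sum_add_distrib]
    rw [Finset.sum_range_succ' (fun i => gco k (n+1) i • (x ^ i * z ^ (n+1-i))) (n+1)]
    rw [Finset.sum_range_succ' (fun i => gco k n i • (x ^ i * z ^ (n+1-i))) n]
    have hext : ∑ i ∈ range (n+1), gco k n (i+1) • (x ^ (i+1) * z ^ (n+1-(i+1))) =
        ∑ i ∈ range n, gco k n (i+1) • (x ^ (i+1) * z ^ (n+1-(i+1))) := by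
      rw [Finset.sum_range_succ, gco_top, zero_smul, add_zero]
    simp only [Nat.succ_sub_succ_eq_sub] at hext ⊢
    rw [← hext]
    have hco : ∀ i ∈ range (n+1),
        gco k n (i+1) • (x ^ (i+1) * z ^ (n-i)) + (((i:k)+1) * c * gco k n i) • (x ^ (i+1) * z ^ (n-i))
          = gco k (n+1) (i+1) • (x ^ (i+1) * z ^ (n-i)) := by
      intro i hi
      rw [← add_smul, gco_rec n i h2]
    have hsum : (∑ i ∈ range (n+1), gco k n (i+1) • (x ^ (i+1) * z ^ (n-i))) +
        ∑ i ∈ range (n+1), (((i:k)+1) * c * gco k n i) • (x ^ (i+1) * z ^ (n-i)) =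
        ∑ i ∈ range (n+1), gco k (n+1) (i+1) • (x ^ (i+1) * z ^ (n-i)) := by
      rw [← Finset.sum_add_distrib]
      exact Finset.sum_congr rfl hco
    rw [← hsum, gco_zero, gco_zero]
    abel

end aux2

section aux3
variable {k : Type*} [Field k] {S : Type*} [Ring S] [Algebra k S]

lemma tco_self (n : ℕ) : tco k n n = 0 := by
  cases n with
  | zero => simp [tco]
  | succ n => simp [tco, Nat.choose_succ_self]

lemma tco_zero (n : ℕ) : tco k n 0 = (n : k) := by simp [tco]

lemma tco_rec (h2 : (2:k) ≠ 0) (n i : ℕ) :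
    tco k (n+1) (i+1) = tco k n (i+1) + ((i:k) * (2:k)⁻¹) * tco k n i + gco k n (i+1) := by
  cases i with
  | zero =>
    simp only [tco, gco, if_neg (Nat.one_ne_zero), if_pos rfl, Nat.cast_zero, zero_mul,
      add_zero, zero_add]
    rw [Nat.choose_succ_succ n 1]
    push_cast [Nat.factorial]
    field_simp
    ring
  | succ i =>
    simp only [tco, gco, if_neg (Nat.succ_ne_zero _),
      show i+1+1 = i+2 from rfl, show i+2+1 = i+3 from rfl]
    rw [Nat.choose_succ_succ n (i+2)]
    have h1 : ((i+3).factorial : k) = ((i:k)+3) * ((i+2).factorial : k) := by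
      rw [show i+3 = (i+2)+1 from rfl, Nat.factorial_succ]
      push_cast; ring
    push_cast [h1]
    have hq : (2:k) * (2:k)⁻¹ = 1 := mul_inv_cancel₀ h2
    simp only [div_eq_mul_inv, ← inv_pow]
    generalize (2:k)⁻¹ = e at hq ⊢
    linear_combination ((n.choose (i+2) : k) * ((i+2).factorial : k) * e^(i+2)) * hq

lemma Trec (z u : S) (n : ℕ) :
    (∑ m ∈ range (n+1), z ^ m * u ^ (n - m)) =
      z * (∑ m ∈ range n, z ^ m * u ^ (n - 1 - m)) + u ^ n := by
  rw [Finset.sum_range_succ' (fun m => z ^ m * u ^ (n - m)) n]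
  rw [Finset.mul_sum]
  simp only [pow_zero, one_mul, Nat.sub_zero]
  congr 1
  refine Finset.sum_congr rfl fun m hm => ?_
  rw [show n - (m+1) = n - 1 - m from by omega, pow_succ', mul_assoc]

lemma telescope {x y z : S} (hyx : y * x = x * z) (n : ℕ) :
    (x + y) ^ n - y ^ n = x * ∑ m ∈ range n, z ^ m * (x + y) ^ (n - 1 - m) := by
  induction n with
  | zero => simp
  | succ n ih =>
    have step : (x + y) ^ (n+1) - y ^ (n+1) =
        y * ((x + y) ^ n - y ^ n) + x * (x + y) ^ n := by
      rw [pow_succ', pow_succ']; noncomm_ring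
    rw [step, ih, ← mul_assoc, hyx, mul_assoc, ← mul_add]
    simp only [Nat.add_sub_cancel]
    rw [Trec]

lemma Tnorm (h2 : (2:k) ≠ 0) {x z : S} (hzx : z * x = x * z + (2:k)⁻¹ • (x * x)) (n : ℕ) :
    ∑ m ∈ range n, z ^ m * (z + (2:k)⁻¹ • x) ^ (n - 1 - m) =
      ∑ i ∈ range n, tco k n i • (x ^ i * z ^ (n - 1 - i)) := by
  set c : k := (2:k)⁻¹ with hc
  induction n with
  | zero => simp
  | succ n ih =>
    simp only [Nat.add_sub_cancel] at *
    rw [Trec, ih, upow h2 hzx, Finset.mul_sum]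
    have hterm : ∀ i ∈ range n,
        z * (tco k n i • (x ^ i * z ^ (n - 1 - i))) =
          tco k n i • (x ^ i * z ^ (n - i)) +
            ((i:k) * c * tco k n i) • (x ^ (i+1) * z ^ (n - 1 - i)) := by
      intro i hi
      have hin : i < n := by simpa using hi
      have h1 : z * (x ^ i * z ^ (n - 1 - i)) =
          x ^ i * z ^ (n - i) + ((i:k) * c) • (x ^ (i+1) * z ^ (n - 1 - i)) := by
        rw [← mul_assoc, zxpow hzx, add_mul, smul_mul_assoc, mul_assoc, ← pow_succ']
        congr 3
        omega
      rw [mul_smul_comm, h1]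
      module
    rw [Finset.sum_congr rfl hterm, Finset.sum_add_distrib]
    -- extend first sum to range (n+1)
    have hext : ∑ i ∈ range n, tco k n i • (x ^ i * z ^ (n - i)) =
        ∑ i ∈ range (n+1), tco k n i • (x ^ i * z ^ (n - i)) := by
      rw [Finset.sum_range_succ, tco_self, zero_smul, add_zero]
    rw [hext]
    -- split sums at bottom
    rw [Finset.sum_range_succ' (fun i => tco k n i • (x ^ i * z ^ (n - i))) n]
    rw [Finset.sum_range_succ' (fun i => gco k n i • (x ^ i * z ^ (n - i))) n]
    rw [Finset.sum_range_succ' (fun i => tco k (n+1) i • (x ^ i * z ^ (n - i))) n]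
    simp only [Nat.succ_sub_succ_eq_sub, pow_zero, one_mul, Nat.sub_zero, tco_zero, gco_zero]
    have hco : ∀ i ∈ range n,
        tco k n (i+1) • (x ^ (i+1) * z ^ (n - (i+1))) +
          (((i:k)) * c * tco k n i) • (x ^ (i+1) * z ^ (n - 1 - i)) +
          gco k n (i+1) • (x ^ (i+1) * z ^ (n - (i+1))) =
          tco k (n+1) (i+1) • (x ^ (i+1) * z ^ (n - (i+1))) := by
      intro i hi
      have he : n - 1 - i = n - (i+1) := by omega
      rw [he, ← add_smul, ← add_smul, tco_rec h2 n i]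
    rw [← Finset.sum_congr rfl hco]
    simp only [Finset.sum_add_distrib]
    push_cast
    have : ((n:k) + 1) • (z ^ n) = (n:k) • z ^ n + (1:k) • z ^ n := by rw [← add_smul]
    rw [this]
    abel

end aux3

/-- Lemma on α, part (c): `α·x = (x+y)^{p−1} − y^{p−1}`. -/
theorem stmt8 (k : Type*) [Field k] (p : ℕ) (hp : p.Prime) (hp2 : 2 < p) [CharP k p]
    (S : Type*) [Ring S] [Algebra k S] (x y : S)
    (hrel : y * x = x * y + (2 : k)⁻¹ • x ^ 2) :
    (-(y ^ (p - 2)) +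
        ∑ i ∈ Finset.Icc 1 (p - 2),
          (((-1 : k) ^ (i + 1) * ((i + 1).factorial : k)) / 2 ^ (i + 1)) •
            (x ^ i * y ^ (p - 2 - i))) * x =
      (x + y) ^ (p - 1) - y ^ (p - 1) := by
  obtain ⟨q, rfl⟩ : ∃ q, p = q + 3 := ⟨p - 3, by omega⟩
  have h2 : (2 : k) ≠ 0 := by
    have h := (CharP.cast_eq_zero_iff k (q+3) 2)
    intro hz
    have : ((2:ℕ) : k) = 0 := by push_cast; exact hz
    rw [h] at this
    have := Nat.le_of_dvd (by norm_num) this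
    omega
  set c : k := (2:k)⁻¹ with hc
  set z : S := y + c • x with hz
  have hcc : c + c = 1 := by rw [hc, ← two_mul]; exact mul_inv_cancel₀ h2
  have hyx : y * x = x * z := by
    rw [hrel, hz, mul_add, mul_smul_comm, sq]
  have hzx : z * x = x * z + c • (x * x) := by
    rw [hz, add_mul, smul_mul_assoc, hyx, mul_add, mul_smul_comm]
  have hu : x + y = z + c • x := by
    rw [hz, add_assoc, ← add_smul, hcc, one_smul, add_comm]
  have hypow : ∀ n : ℕ, y ^ n * x = x * z ^ n := by
    intro n
    induction n with
    | zero => simp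
    | succ n ih => rw [pow_succ, mul_assoc, hyx, ← mul_assoc, ih, mul_assoc, ← pow_succ]
  -- cast facts
  have hm1 : ((q + 2 : ℕ) : k) = -1 := by
    have hp0 : ((q + 3 : ℕ) : k) = 0 := CharP.cast_eq_zero k (q+3)
    push_cast at hp0 ⊢
    linear_combination hp0
  have hchoose : ∀ j : ℕ, j ≤ q + 2 → (((q+2).choose j : ℕ) : k) = (-1) ^ j := by
    intro j
    induction j with
    | zero => simp
    | succ j ih =>
      intro hj
      have hdvd : (q+3) ∣ (q+3).choose (j+1) :=
        Nat.Prime.dvd_choose_self hp (by omega) (by omega)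
      have hcast : (((q+3).choose (j+1) : ℕ) : k) = 0 := by
        rw [CharP.cast_eq_zero_iff k (q+3)]
        exact hdvd
      rw [show (q+3).choose (j+1) = (q+2).choose j + (q+2).choose (j+1) from
        Nat.choose_succ_succ _ _] at hcast
      push_cast at hcast
      rw [ih (by omega)] at hcast
      rw [pow_succ]
      linear_combination hcast
  -- normalize the nat subtractions
  simp only [show q + 3 - 2 = q + 1 from rfl, show q + 3 - 1 = q + 2 from rfl]
  -- rewrite LHS
  have hL : (-(y ^ (q+1)) +
      ∑ i ∈ Finset.Icc 1 (q+1),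
        (((-1 : k) ^ (i + 1) * ((i + 1).factorial : k)) / 2 ^ (i + 1)) •
          (x ^ i * y ^ (q + 1 - i))) * x =
      x * (-(z ^ (q+1)) +
        ∑ i ∈ Finset.Icc 1 (q+1),
          (((-1 : k) ^ (i + 1) * ((i + 1).factorial : k)) / 2 ^ (i + 1)) •
            (x ^ i * z ^ (q + 1 - i))) := by
    rw [add_mul, neg_mul, hypow (q+1), Finset.sum_mul, mul_add, mul_neg, Finset.mul_sum]
    congr 1
    refine Finset.sum_congr rfl fun i hi => ?_
    rw [smul_mul_assoc, mul_assoc, hypow, mul_smul_comm]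
    congr 1
    rw [← mul_assoc, ← mul_assoc, ← pow_succ, ← pow_succ']
  rw [hL, telescope hyx (q+2), hu, Tnorm h2 hzx (q+2)]
  congr 1
  -- now equate the two sums
  simp only [show q + 2 - 1 = q + 1 from rfl]
  rw [Finset.sum_range_succ' (fun i => tco k (q+2) i • (x ^ i * z ^ (q + 1 - i))) (q+1)]
  rw [show Finset.Icc 1 (q+1) = Finset.Ico 1 (q+2) from (Finset.Ico_add_one_right_eq_Icc 1 (q+1)).symm]
  rw [Finset.sum_Ico_eq_sum_range]
  simp only [show q + 2 - 1 = q + 1 from rfl, Nat.succ_sub_succ_eq_sub, pow_zero, one_mul,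
    Nat.sub_zero, tco_zero, hm1, neg_smul, one_smul]
  rw [add_comm]
  congr 1
  refine Finset.sum_congr rfl fun i hi => ?_
  have hilt : i < q + 1 := by simpa using hi
  rw [show 1 + i = i + 1 from Nat.add_comm 1 i]
  simp only [Nat.succ_sub_succ_eq_sub]
  congr 1
  rw [tco, if_neg (Nat.succ_ne_zero _), hchoose (i+1+1) (by omega)]
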